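/- Under the setting of the previous statement, with P := I_d - C₁(K₁C₁)^{-1}K₁, Q := I_{N-c} - E₂ + K₂C₂ - K₂C₁(K₁C₁)^{-1}K₁C₂ invertible, one has k(1) = P - PC₂Q^{-1}K₂P, and consequently rank k(1) = d - c provided I_d + PC₂(I_{N-c}-E₂)^{-1}K₂P is invertible and I_{N-c} - E₂ is invertible. -/

import Mathlib

open Matrix

private lemma block_right_inv {c l : ℕ}
    (A : Matrix (Fin c) (Fin c) ℝ) (B : Matrix (Fin c) (Fin l) ℝ)
    (C : Matrix (Fin l) (Fin c) ℝ) (D : Matrix (Fin l) (Fin l) ℝ)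
    (Ai : Matrix (Fin c) (Fin c) ℝ) (Qi : Matrix (Fin l) (Fin l) ℝ)
    (hA1 : A * Ai = 1) (hQ1 : (D - C * Ai * B) * Qi = 1) :
    fromBlocks A B C D *
      fromBlocks (Ai + Ai * B * Qi * C * Ai) (-(Ai * B * Qi)) (-(Qi * C * Ai)) Qi = 1 := by
  have hDQ : D * Qi = 1 + C * Ai * B * Qi := by
    rw [Matrix.sub_mul, sub_eq_iff_eq_add] at hQ1
    rw [hQ1]
  rw [fromBlocks_multiply, ← fromBlocks_one, fromBlocks_inj]
  refine ⟨?_, ?_, ?_, ?_⟩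
  · simp only [Matrix.mul_add, Matrix.mul_neg, ← Matrix.mul_assoc, hA1, Matrix.one_mul]
    abel
  · simp only [Matrix.mul_neg, ← Matrix.mul_assoc, hA1, Matrix.one_mul]
    abel
  · simp only [Matrix.mul_add, Matrix.mul_neg, ← Matrix.mul_assoc]
    rw [hDQ, Matrix.add_mul, Matrix.add_mul, Matrix.one_mul]
    abel
  · simp only [Matrix.mul_neg, ← Matrix.mul_assoc]
    rw [hDQ]
    abel

private lemma rank_add_rank_idem {d : ℕ} (P : Matrix (Fin d) (Fin d) ℝ) (h : P * P = P) :
    P.rank + ((1 : Matrix (Fin d) (Fin d) ℝ) - P).rank = d := by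
  have h0 : P * (1 - P) = 0 := by rw [Matrix.mul_sub, Matrix.mul_one, h, sub_self]
  have hker : LinearMap.range ((1 : Matrix (Fin d) (Fin d) ℝ) - P).mulVecLin
      = LinearMap.ker P.mulVecLin := by
    apply le_antisymm
    · rintro x ⟨y, rfl⟩
      simp only [LinearMap.mem_ker, mulVecLin_apply, mulVec_mulVec, ← mulVec_mulVec, h0]
      rw [mulVec_mulVec, h0, zero_mulVec]
    · intro x hx
      refine ⟨x, ?_⟩
      simp only [LinearMap.mem_ker, mulVecLin_apply] at hx ⊢
      rw [sub_mulVec, one_mulVec, hx, sub_zero]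
  have hrn := LinearMap.finrank_range_add_finrank_ker P.mulVecLin
  rw [← hker] at hrn
  simpa [Matrix.rank, Module.finrank_fintype_fun_eq_card] using hrn

theorem stmt_14 {N c d : ℕ}
    (C₁ : Matrix (Fin d) (Fin c) ℝ) (C₂ : Matrix (Fin d) (Fin (N - c)) ℝ)
    (K₁ : Matrix (Fin c) (Fin d) ℝ) (K₂ : Matrix (Fin (N - c)) (Fin d) ℝ)
    (E₂ : Matrix (Fin (N - c)) (Fin (N - c)) ℝ)
    (hG : IsUnit (Matrix.fromBlocks (K₁ * C₁) (K₁ * C₂) (K₂ * C₁) (K₂ * C₂ + 1 - E₂)))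
    (hK₁C₁ : IsUnit (K₁ * C₁))
    (hQ : IsUnit ((1 : Matrix (Fin (N - c)) (Fin (N - c)) ℝ) - E₂ + K₂ * C₂ -
        K₂ * C₁ * (K₁ * C₁)⁻¹ * (K₁ * C₂)))
    (hE : IsUnit ((1 : Matrix (Fin (N - c)) (Fin (N - c)) ℝ) - E₂))
    (hR : IsUnit ((1 : Matrix (Fin d) (Fin d) ℝ) +
        ((1 : Matrix (Fin d) (Fin d) ℝ) - C₁ * (K₁ * C₁)⁻¹ * K₁) * C₂ *
          ((1 : Matrix (Fin (N - c)) (Fin (N - c)) ℝ) - E₂)⁻¹ * K₂ *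
          ((1 : Matrix (Fin d) (Fin d) ℝ) - C₁ * (K₁ * C₁)⁻¹ * K₁))) :
    ((1 : Matrix (Fin d) (Fin d) ℝ) -
        Matrix.fromCols C₁ C₂ *
          (Matrix.fromBlocks (K₁ * C₁) (K₁ * C₂) (K₂ * C₁) (K₂ * C₂ + 1 - E₂))⁻¹ *
          Matrix.fromRows K₁ K₂)
      = ((1 : Matrix (Fin d) (Fin d) ℝ) - C₁ * (K₁ * C₁)⁻¹ * K₁) -
        ((1 : Matrix (Fin d) (Fin d) ℝ) - C₁ * (K₁ * C₁)⁻¹ * K₁) * C₂ *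
          ((1 : Matrix (Fin (N - c)) (Fin (N - c)) ℝ) - E₂ + K₂ * C₂ -
            K₂ * C₁ * (K₁ * C₁)⁻¹ * (K₁ * C₂))⁻¹ * K₂ *
          ((1 : Matrix (Fin d) (Fin d) ℝ) - C₁ * (K₁ * C₁)⁻¹ * K₁) ∧
    ((1 : Matrix (Fin d) (Fin d) ℝ) -
        Matrix.fromCols C₁ C₂ *
          (Matrix.fromBlocks (K₁ * C₁) (K₁ * C₂) (K₂ * C₁) (K₂ * C₂ + 1 - E₂))⁻¹ *
          Matrix.fromRows K₁ K₂).rank = d - c := by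
  have hAdet : IsUnit (K₁ * C₁).det := (Matrix.isUnit_iff_isUnit_det _).mp hK₁C₁
  have hAA : (K₁ * C₁) * (K₁ * C₁)⁻¹ = 1 := Matrix.mul_nonsing_inv _ hAdet
  have hAA' : (K₁ * C₁)⁻¹ * (K₁ * C₁) = 1 := Matrix.nonsing_inv_mul _ hAdet
  set Q : Matrix (Fin (N - c)) (Fin (N - c)) ℝ :=
    1 - E₂ + K₂ * C₂ - K₂ * C₁ * (K₁ * C₁)⁻¹ * (K₁ * C₂) with hQdef
  set S : Matrix (Fin (N - c)) (Fin (N - c)) ℝ := 1 - E₂ with hSdef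
  set P : Matrix (Fin d) (Fin d) ℝ := 1 - C₁ * (K₁ * C₁)⁻¹ * K₁ with hPdef
  have hQdet : IsUnit Q.det := (Matrix.isUnit_iff_isUnit_det _).mp hQ
  have hQQ : Q * Q⁻¹ = 1 := Matrix.mul_nonsing_inv _ hQdet
  have hSdet : IsUnit S.det := (Matrix.isUnit_iff_isUnit_det _).mp hE
  have hSS' : S⁻¹ * S = 1 := Matrix.nonsing_inv_mul _ hSdet
  -- the Schur complement identity
  have hQD : K₂ * C₂ + 1 - E₂ - K₂ * C₁ * (K₁ * C₁)⁻¹ * (K₁ * C₂) = Q := by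
    rw [hQdef, hSdef]; abel
  have hq1 : (K₂ * C₂ + 1 - E₂ - K₂ * C₁ * (K₁ * C₁)⁻¹ * (K₁ * C₂)) * Q⁻¹ = 1 := by
    rw [hQD]; exact hQQ
  have hGinv : (Matrix.fromBlocks (K₁ * C₁) (K₁ * C₂) (K₂ * C₁) (K₂ * C₂ + 1 - E₂))⁻¹ =
      fromBlocks ((K₁ * C₁)⁻¹ + (K₁ * C₁)⁻¹ * (K₁ * C₂) * Q⁻¹ * (K₂ * C₁) * (K₁ * C₁)⁻¹)
        (-((K₁ * C₁)⁻¹ * (K₁ * C₂) * Q⁻¹)) (-(Q⁻¹ * (K₂ * C₁) * (K₁ * C₁)⁻¹)) Q⁻¹ :=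
    Matrix.inv_eq_right_inv (block_right_inv _ _ _ _ _ _ hAA hq1)
  have key1 : ((1 : Matrix (Fin d) (Fin d) ℝ) -
      Matrix.fromCols C₁ C₂ *
        (Matrix.fromBlocks (K₁ * C₁) (K₁ * C₂) (K₂ * C₁) (K₂ * C₂ + 1 - E₂))⁻¹ *
        Matrix.fromRows K₁ K₂) = P - P * C₂ * Q⁻¹ * K₂ * P := by
    rw [hGinv, Matrix.fromCols_mul_fromBlocks, Matrix.fromCols_mul_fromRows, hPdef]
    simp only [Matrix.mul_add, Matrix.add_mul, Matrix.mul_sub, Matrix.sub_mul,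
      Matrix.mul_neg, Matrix.neg_mul, Matrix.mul_one, Matrix.one_mul, Matrix.mul_assoc]
    abel
  refine ⟨key1, ?_⟩
  rw [key1]
  -- P is idempotent
  have hXX : C₁ * (K₁ * C₁)⁻¹ * K₁ * (C₁ * (K₁ * C₁)⁻¹ * K₁) = C₁ * (K₁ * C₁)⁻¹ * K₁ := by
    have h1 : C₁ * (K₁ * C₁)⁻¹ * K₁ * (C₁ * (K₁ * C₁)⁻¹ * K₁)
        = C₁ * ((K₁ * C₁)⁻¹ * (K₁ * C₁)) * ((K₁ * C₁)⁻¹ * K₁) := by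
      simp only [Matrix.mul_assoc]
    rw [h1, hAA', Matrix.mul_one, Matrix.mul_assoc]
  have hPP : P * P = P := by
    rw [hPdef]
    simp only [Matrix.sub_mul, Matrix.mul_sub, Matrix.mul_one, Matrix.one_mul, hXX]
    abel
  have hQS : K₂ * P * C₂ = Q - S := by
    rw [hPdef, hQdef]
    simp only [Matrix.mul_sub, Matrix.sub_mul, Matrix.mul_one, Matrix.one_mul, Matrix.mul_assoc]
    abel
  have e0 : P * (P - P * C₂ * Q⁻¹ * K₂ * P) = P - P * C₂ * Q⁻¹ * K₂ * P := by
    simp only [Matrix.mul_sub, ← Matrix.mul_assoc, hPP]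
  have e1 : K₂ * (P - P * C₂ * Q⁻¹ * K₂ * P) = S * (Q⁻¹ * (K₂ * P)) := by
    simp only [Matrix.mul_sub, ← Matrix.mul_assoc]
    rw [hQS, Matrix.sub_mul, Matrix.sub_mul, Matrix.sub_mul, hQQ, Matrix.one_mul]
    simp only [Matrix.mul_assoc]
    abel
  have hRk : (1 + P * C₂ * S⁻¹ * K₂ * P) * (P - P * C₂ * Q⁻¹ * K₂ * P) = P := by
    rw [Matrix.add_mul, Matrix.one_mul, Matrix.mul_assoc (P * C₂ * S⁻¹ * K₂) P _, e0,
      Matrix.mul_assoc (P * C₂ * S⁻¹) K₂ _, e1]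
    have h2 : P * C₂ * S⁻¹ * (S * (Q⁻¹ * (K₂ * P))) = P * C₂ * (S⁻¹ * S) * (Q⁻¹ * (K₂ * P)) := by
      simp only [Matrix.mul_assoc]
    rw [h2, hSS', Matrix.mul_one]
    simp only [← Matrix.mul_assoc]
    abel
  have hRdet : IsUnit (1 + P * C₂ * S⁻¹ * K₂ * P).det := (Matrix.isUnit_iff_isUnit_det _).mp hR
  have hRR' : (1 + P * C₂ * S⁻¹ * K₂ * P)⁻¹ * (1 + P * C₂ * S⁻¹ * K₂ * P) = 1 :=
    Matrix.nonsing_inv_mul _ hRdet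
  have hk : (1 + P * C₂ * S⁻¹ * K₂ * P)⁻¹ * ((1 + P * C₂ * S⁻¹ * K₂ * P) *
      (P - P * C₂ * Q⁻¹ * K₂ * P)) = P - P * C₂ * Q⁻¹ * K₂ * P := by
    rw [← Matrix.mul_assoc, hRR', Matrix.one_mul]
  rw [hRk] at hk
  have hrankk : (P - P * C₂ * Q⁻¹ * K₂ * P).rank = P.rank := by
    refine le_antisymm ?_ ?_
    · rw [← hk]; exact Matrix.rank_mul_le_right _ _
    · conv_lhs => rw [← hRk]
      exact Matrix.rank_mul_le_right _ _
  have h1P : (1 : Matrix (Fin d) (Fin d) ℝ) - P = C₁ * (K₁ * C₁)⁻¹ * K₁ := by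
    rw [hPdef]; exact sub_sub_cancel _ _
  have hCfix : C₁ * (K₁ * C₁)⁻¹ * K₁ * C₁ = C₁ := by
    have h1 : C₁ * (K₁ * C₁)⁻¹ * K₁ * C₁ = C₁ * ((K₁ * C₁)⁻¹ * (K₁ * C₁)) := by
      simp only [Matrix.mul_assoc]
    rw [h1, hAA', Matrix.mul_one]
  have hc1 : (C₁ * (K₁ * C₁)⁻¹ * K₁).rank ≤ c := by
    calc (C₁ * (K₁ * C₁)⁻¹ * K₁).rank ≤ (C₁ * (K₁ * C₁)⁻¹).rank :=
          Matrix.rank_mul_le_left _ _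
      _ ≤ C₁.rank := Matrix.rank_mul_le_left _ _
      _ ≤ Fintype.card (Fin c) := Matrix.rank_le_card_width C₁
      _ = c := Fintype.card_fin c
  have hc2 : c ≤ (C₁ * (K₁ * C₁)⁻¹ * K₁).rank := by
    calc c = Fintype.card (Fin c) := (Fintype.card_fin c).symm
      _ = (K₁ * C₁).rank := (Matrix.rank_of_isUnit _ hK₁C₁).symm
      _ ≤ C₁.rank := Matrix.rank_mul_le_right _ _
      _ = (C₁ * (K₁ * C₁)⁻¹ * K₁ * C₁).rank := by rw [hCfix]
      _ ≤ (C₁ * (K₁ * C₁)⁻¹ * K₁).rank := Matrix.rank_mul_le_left _ _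
  have hsum := rank_add_rank_idem P hPP
  rw [h1P] at hsum
  have h1Pc : (C₁ * (K₁ * C₁)⁻¹ * K₁).rank = c := le_antisymm hc1 hc2
  rw [h1Pc] at hsum
  omega
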